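/- arXiv:math/9310234 — 2 statements merged into one kernel-verified Lean document; each statement's English description precedes it below -/
import Mathlib

section
/- The angle arctan(1/2) is an irrational multiple of π. -/
open Complex Real

lemma pow_mod5 (n : ℕ) : ∃ x y : ℤ, ((3 : ℂ) + 4 * I) ^ (n + 1) = ((5*x+3 : ℤ) : ℂ) + ((5*y+4 : ℤ) : ℂ) * I := by
  induction n with
  | zero => exact ⟨0, 0, by push_cast; ring⟩
  | succ n ih =>
    obtain ⟨x, y, h⟩ := ih
    refine ⟨3*x - 4*y - 2, 4*x + 3*y + 4, ?_⟩
    rw [pow_succ, h]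
    push_cast
    ring_nf
    rw [Complex.I_sq]
    ring

/-- `arctan(1/2)` is an irrational multiple of π. -/
theorem arctan_half_div_pi_irrational : Irrational (Real.arctan (1 / 2) / Real.pi) := by
  rw [Irrational]
  intro ⟨r, hr⟩
  set θ := Real.arctan (1/2) with hθ
  have hπ : (Real.pi : ℝ) ≠ 0 := Real.pi_ne_zero
  have hθr : θ = r * Real.pi := by
    field_simp at hr; linarith [hr]
  set c := Real.cos θ with hcdef
  set s := Real.sin θ with hsdef
  have hsq : Real.sqrt (1 + (1/2:ℝ)^2) ^ 2 = 1 + (1/2:ℝ)^2 := Real.sq_sqrt (by norm_num)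
  have hc2 : c^2 = 4/5 := by
    rw [hcdef, hθ, Real.cos_arctan, div_pow, one_pow, hsq]; norm_num
  have hs2 : s^2 = 1/5 := by
    rw [hsdef, hθ, Real.sin_arctan, div_pow, hsq]; norm_num
  have hsc : s*c = 2/5 := by
    rw [hsdef, hcdef, hθ, Real.sin_arctan, Real.cos_arctan]
    rw [div_mul_div_comm, mul_one, ← pow_two, hsq]; norm_num
  -- z² = (3+4i)/5
  have hz2 : Complex.exp (θ * I) ^ 2 = ((3:ℂ) + 4*I)/5 := by
    rw [Complex.exp_mul_I]
    rw [← Complex.ofReal_cos, ← Complex.ofReal_sin, ← hcdef, ← hsdef]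
    have : ((c:ℂ) + s*I)^2 = (c^2 - s^2 : ℝ) + (2*(s*c) : ℝ)*I := by
      push_cast; ring_nf; rw [Complex.I_sq]; ring
    rw [this, hc2, hs2, hsc]
    push_cast; ring
  set q := r.den with hq
  have hqpos : 0 < q := r.pos
  -- exp(θ I)^(2q) = 1
  have hpow : Complex.exp (θ * I) ^ (2*q) = 1 := by
    rw [← Complex.exp_nat_mul]
    have harg : ((2*q : ℕ) : ℂ) * (θ * I) = (r.num : ℤ) * (2 * Real.pi * I) := by
      have hnum : (r:ℝ) * (q:ℝ) = (r.num : ℝ) := by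
        rw [hq]; exact_mod_cast congrArg (Rat.cast : ℚ → ℝ) (Rat.mul_den_eq_num r)
      have : (2*q : ℝ) * θ = (r.num : ℝ) * (2 * Real.pi) := by
        rw [hθr]; linear_combination 2*Real.pi*hnum
      calc ((2*q : ℕ) : ℂ) * (θ * I) = (((2*q:ℝ)*θ : ℝ) : ℂ) * I := by push_cast; ring
        _ = (r.num : ℤ) * (2 * Real.pi * I) := by rw [this]; push_cast; ring
    rw [harg, Complex.exp_int_mul_two_pi_mul_I]
  have h5 : ((3:ℂ) + 4*I) ^ q = (5:ℂ)^q := by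
    have : (((3:ℂ) + 4*I)/5) ^ q = 1 := by
      rw [← hz2, ← pow_mul, hpow]
    field_simp at this
    exact (div_eq_one_iff_eq (pow_ne_zero _ (by norm_num))).mp (by simpa [div_pow] using this)
  obtain ⟨x, y, hxy⟩ := pow_mod5 (q - 1)
  rw [Nat.sub_add_cancel hqpos, h5] at hxy
  have him := congrArg Complex.im hxy
  simp at him
  have : (5*y+4 : ℤ) = 0 := by
    have h0 : ((5:ℂ)^q).im = 0 := by
      rw [show (5:ℂ)^q = (((5:ℝ)^q : ℝ) : ℂ) by norm_num]; exact Complex.ofReal_im _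
    have h' : ((5*y+4 : ℤ) : ℝ) = 0 := by push_cast; linarith [him, h0]
    exact_mod_cast h'
  omega
end

section
/- Let A be a primitive nonnegative square matrix and B a complex matrix with |B_{jk}| ≤ A_{jk} for all j,k, such that strict inequality cannot be removed by a diagonal unitary conjugation (i.e., B is not of the form c·D A D⁻¹ with |c|=1 and D diagonal unitary). Then the spectral radius of B is strictly less than the Perron–Frobenius eigenvalue of A. -/
lemma re_eq_norm {w : ℂ} (h : w.re = ‖w‖) : w = (‖w‖ : ℂ) := by
  have h2 : ‖w‖ ^ 2 = w.re ^ 2 + w.im ^ 2 := by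
    rw [Complex.sq_norm, Complex.normSq_apply]; ring
  rw [h] at h2
  have him2 : w.im ^ 2 = 0 := by linarith
  have him : w.im = 0 := pow_eq_zero_iff (by norm_num) |>.mp him2
  have hw : w = (w.re : ℂ) := Complex.ext rfl (by simp [him])
  rw [← h]; exact hw

lemma tri_eq {ι : Type*} (s : Finset ι) (f : ι → ℂ)
    (h : ‖∑ k ∈ s, f k‖ = ∑ k ∈ s, ‖f k‖) :
    ∀ k ∈ s, (‖∑ j ∈ s, f j‖ : ℂ) * f k = (‖f k‖ : ℂ) * ∑ j ∈ s, f j := by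
  set S := ∑ j ∈ s, f j with hS
  by_cases hS0 : S = 0
  · intro k hk
    have h0 : ∑ k ∈ s, ‖f k‖ = 0 := by rw [← h, hS0, norm_zero]
    have hfk : f k = 0 := by
      have := (Finset.sum_eq_zero_iff_of_nonneg (fun i _ => norm_nonneg (f i))).mp h0 k hk
      simpa using this
    simp [hfk, hS0]
  · intro k hk
    have key : ∀ j ∈ s, ((starRingEnd ℂ) S * f j).re = ‖S‖ * ‖f j‖ := by
      have hle : ∀ j ∈ s, ((starRingEnd ℂ) S * f j).re ≤ ‖S‖ * ‖f j‖ := by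
        intro j _
        calc ((starRingEnd ℂ) S * f j).re ≤ ‖(starRingEnd ℂ) S * f j‖ := Complex.re_le_norm _
          _ = ‖S‖ * ‖f j‖ := by rw [norm_mul, RCLike.norm_conj]
      have hsum : ∑ j ∈ s, ((starRingEnd ℂ) S * f j).re = ∑ j ∈ s, ‖S‖ * ‖f j‖ := by
        have h1 : ∑ j ∈ s, ((starRingEnd ℂ) S * f j).re = ((starRingEnd ℂ) S * S).re := by
          rw [hS, Finset.mul_sum]
          exact (Complex.re_sum _ _).symm
        have h2 : ((starRingEnd ℂ) S * S).re = ‖S‖ ^ 2 := by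
          rw [mul_comm, Complex.mul_conj, Complex.ofReal_re, Complex.normSq_eq_norm_sq]
        rw [h1, h2, ← Finset.mul_sum, ← h]; ring
      exact fun j hj => (Finset.sum_eq_sum_iff_of_le hle).mp hsum j hj
    have hck : (starRingEnd ℂ) S * f k = ((‖S‖ * ‖f k‖ : ℝ) : ℂ) := by
      have hre : ((starRingEnd ℂ) S * f k).re = ‖(starRingEnd ℂ) S * f k‖ := by
        rw [key k hk, norm_mul, RCLike.norm_conj]
      have := re_eq_norm hre
      rw [this, norm_mul, RCLike.norm_conj]
    have hmul := congrArg (fun x => S * x) hck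
    simp only [← mul_assoc] at hmul
    have hnorm2 : S * (starRingEnd ℂ) S = ((‖S‖ ^ 2 : ℝ) : ℂ) := by
      rw [Complex.mul_conj, Complex.normSq_eq_norm_sq]
    rw [hnorm2] at hmul
    have hSn : (‖S‖ : ℂ) ≠ 0 := by
      simpa using norm_ne_zero_iff.mpr hS0
    have goal2 : (‖S‖ : ℂ) * ((‖S‖ : ℂ) * f k) = (‖S‖ : ℂ) * ((‖f k‖ : ℂ) * S) := by
      push_cast at hmul
      ring_nf at hmul ⊢
      linear_combination hmul
    exact mul_left_cancel₀ hSn goal2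


/-- Wielandt-type lemma: if `A` is a primitive nonnegative matrix,
`B` is a complex matrix entrywise dominated by `A` in modulus, and `B` is not of
the form `c • D A D⁻¹` with `|c| = 1` and `D` diagonal unitary, then the spectral
radius of `B` is strictly less than the Perron–Frobenius eigenvalue `ρ` of `A`
(characterized by its positive eigenvector). -/
theorem wielandt_strict_spectral_radius {n : ℕ}
    (A : Matrix (Fin n) (Fin n) ℝ) (hA : ∀ j k, 0 ≤ A j k)
    (hprim : ∃ r ≥ 1, ∀ j k, 0 < (A ^ r) j k)
    (B : Matrix (Fin n) (Fin n) ℂ) (hdom : ∀ j k, ‖B j k‖ ≤ A j k)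
    (hnot : ¬ ∃ (c : ℂ) (d : Fin n → ℂ), ‖c‖ = 1 ∧ (∀ i, ‖d i‖ = 1) ∧
      B = c • (Matrix.diagonal d * A.map Complex.ofReal *
        Matrix.diagonal fun i => (d i)⁻¹))
    (ρ : ℝ) (v : Fin n → ℝ) (hv : ∀ i, 0 < v i)
    (heig : Matrix.mulVec A v = ρ • v) :
    ∀ z ∈ spectrum ℂ B, ‖z‖ < ρ := by
  intro z hz
  obtain ⟨r, hr1, hrpos⟩ := hprim
  -- eigenvector
  rw [spectrum.mem_iff, Matrix.isUnit_iff_isUnit_det, isUnit_iff_ne_zero, not_not] at hz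
  obtain ⟨u, hu, hmu⟩ := (Matrix.exists_mulVec_eq_zero_iff).mpr hz
  rw [Matrix.sub_mulVec] at hmu
  have halg : (algebraMap ℂ (Matrix (Fin n) (Fin n) ℂ) z).mulVec u = z • u := by
    funext i
    simp [Matrix.algebraMap_eq_diagonal, Matrix.mulVec_diagonal]
  rw [halg, sub_eq_zero] at hmu
  have hBu : B.mulVec u = z • u := hmu.symm
  set w : Fin n → ℝ := fun i => ‖u i‖ with hwdef
  obtain ⟨i1, hi1⟩ := Function.ne_iff.mp hu
  have hi1 : u i1 ≠ 0 := by simpa using hi1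
  have hi1' : 0 < w i1 := norm_pos_iff.mpr hi1
  have hAv : ∀ i, ∑ k, A i k * v k = ρ * v i := by
    intro i
    have := congrFun heig i
    simpa [Matrix.mulVec, dotProduct] using this
  have hρ0 : 0 ≤ ρ := by
    have h1 : 0 ≤ ∑ k, A i1 k * v k :=
      Finset.sum_nonneg fun k _ => mul_nonneg (hA i1 k) (hv k).le
    rw [hAv i1, mul_comm] at h1
    exact nonneg_of_mul_nonneg_right h1 (hv i1)
  -- powers
  have hpow : ∀ m, (A ^ m).mulVec v = (ρ ^ m) • v := by
    intro m
    induction m with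
    | zero => simp [Matrix.one_mulVec]
    | succ m ih =>
      rw [pow_succ', ← Matrix.mulVec_mulVec, ih, Matrix.mulVec_smul, heig,
        pow_succ']
      ext i; simp [mul_assoc, mul_comm, mul_left_comm]
  have hρpos : 0 < ρ := by
    rcases hρ0.lt_or_eq with h | h
    · exact h
    · exfalso
      have h1 : (0:ℝ) < ∑ k, (A ^ r) i1 k * v k :=
        Finset.sum_pos (fun k _ => mul_pos (hrpos i1 k) (hv k)) ⟨i1, Finset.mem_univ i1⟩
      have h2 := congrFun (hpow r) i1
      simp only [Matrix.mulVec, dotProduct, Pi.smul_apply, smul_eq_mul] at h2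
      rw [h2, ← h, zero_pow (by omega), zero_mul] at h1
      exact lt_irrefl 0 h1
  -- basic domination inequality
  have hBu' : ∀ i, ∑ k, B i k * u k = z * u i := by
    intro i
    have := congrFun hBu i
    simpa [Matrix.mulVec, dotProduct] using this
  have h1 : ∀ i, ‖z‖ * w i ≤ ∑ k, A i k * w k := by
    intro i
    calc ‖z‖ * w i = ‖z * u i‖ := (norm_mul _ _).symm
      _ = ‖∑ k, B i k * u k‖ := by rw [hBu' i]
      _ ≤ ∑ k, ‖B i k * u k‖ := norm_sum_le _ _
      _ = ∑ k, ‖B i k‖ * w k := Finset.sum_congr rfl fun k _ => norm_mul _ _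
      _ ≤ ∑ k, A i k * w k :=
        Finset.sum_le_sum fun k _ => mul_le_mul_of_nonneg_right (hdom i k) (norm_nonneg _)
  -- maximum ratio
  obtain ⟨i0, -, hmax⟩ := Finset.exists_max_image Finset.univ (fun i => w i / v i)
    ⟨i1, Finset.mem_univ i1⟩
  set t : ℝ := w i0 / v i0 with htdef
  have htv : ∀ j, w j ≤ t * v j := fun j => by
    have := (div_le_iff₀ (hv j)).mp (hmax j (Finset.mem_univ j))
    linarith [this]
  have ht0 : 0 < t :=
    lt_of_lt_of_le (div_pos hi1' (hv i1)) (hmax i1 (Finset.mem_univ i1))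
  have hwi0 : w i0 = t * v i0 := by
    rw [htdef, div_mul_cancel₀ _ (hv i0).ne']
  by_contra hzc
  push_neg at hzc
  have h2 : ∀ i, ρ * w i ≤ ∑ k, A i k * w k := fun i =>
    le_trans (mul_le_mul_of_nonneg_right hzc (norm_nonneg _)) (h1 i)
  set y : Fin n → ℝ := fun j => t * v j - w j with hydef
  have hy0 : ∀ j, 0 ≤ y j := fun j => sub_nonneg.mpr (htv j)
  have hyi0 : y i0 = 0 := by simp [hydef, hwi0]
  have hAy : ∀ i, ∑ k, A i k * y k ≤ ρ * y i := by
    intro i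
    have : ∑ k, A i k * y k = t * (∑ k, A i k * v k) - ∑ k, A i k * w k := by
      rw [Finset.mul_sum, ← Finset.sum_sub_distrib]
      congr 1; funext k; simp [hydef]; ring
    rw [this, hAv i]
    have := h2 i
    simp only [hydef]
    nlinarith [h2 i]
  have hpowy : ∀ m i, ((A ^ m).mulVec y) i ≤ ρ ^ m * y i := by
    intro m
    induction m with
    | zero => intro i; simp [Matrix.one_mulVec]
    | succ m ih =>
      intro i
      have hstep : ((A ^ (m+1)).mulVec y) i = ∑ k, A i k * ((A ^ m).mulVec y) k := by
        rw [pow_succ', ← Matrix.mulVec_mulVec]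
        simp [Matrix.mulVec, dotProduct]
      rw [hstep]
      calc ∑ k, A i k * ((A ^ m).mulVec y) k ≤ ∑ k, A i k * (ρ ^ m * y k) :=
            Finset.sum_le_sum fun k _ => mul_le_mul_of_nonneg_left (ih k) (hA i k)
        _ = ρ ^ m * ∑ k, A i k * y k := by rw [Finset.mul_sum]; congr 1; funext k; ring
        _ ≤ ρ ^ m * (ρ * y i) := mul_le_mul_of_nonneg_left (hAy i) (pow_nonneg hρ0 m)
        _ = ρ ^ (m+1) * y i := by ring
  have hyzero : ∀ k, y k = 0 := by
    have hsum : ∑ k, (A ^ r) i0 k * y k ≤ 0 := by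
      have h3 := hpowy r i0
      simp only [Matrix.mulVec, dotProduct] at h3
      rw [hyi0, mul_zero] at h3
      exact h3
    have hnn : ∀ k ∈ Finset.univ, 0 ≤ (A ^ r) i0 k * y k :=
      fun k _ => mul_nonneg (hrpos i0 k).le (hy0 k)
    have hzero : ∀ k ∈ Finset.univ, (A ^ r) i0 k * y k = 0 := by
      have : ∑ k, (A ^ r) i0 k * y k = 0 :=
        le_antisymm hsum (Finset.sum_nonneg hnn)
      exact (Finset.sum_eq_zero_iff_of_nonneg hnn).mp this
    intro k
    have := hzero k (Finset.mem_univ k)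
    rcases mul_eq_zero.mp this with h | h
    · exact absurd h (hrpos i0 k).ne'
    · exact h
  have hweq : ∀ k, w k = t * v k := fun k => by
    have := hyzero k; simp [hydef] at this; linarith
  have hwpos : ∀ k, 0 < w k := fun k => (hweq k) ▸ mul_pos ht0 (hv k)
  have hune : ∀ k, u k ≠ 0 := fun k => norm_pos_iff.mp (hwpos k)
  have hAw : ∀ i, ∑ k, A i k * w k = ρ * w i := by
    intro i
    calc ∑ k, A i k * w k = t * ∑ k, A i k * v k := by
          rw [Finset.mul_sum]; congr 1; funext k; rw [hweq k]; ring
      _ = t * (ρ * v i) := by rw [hAv i]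
      _ = ρ * w i := by rw [hweq i]; ring
  -- norm z = ρ
  have hzρ : ‖z‖ = ρ := by
    have hle : ‖z‖ * w i0 ≤ ρ * w i0 := (h1 i0).trans_eq (hAw i0)
    have := (mul_le_mul_iff_of_pos_right (hwpos i0)).mp hle
    linarith [hzc]
  -- equality chains
  have hsum_eq : ∀ i, ∑ k, ‖B i k * u k‖ = ρ * w i := by
    intro i
    have hle1 : ∑ k, ‖B i k * u k‖ ≤ ∑ k, A i k * w k :=
      Finset.sum_le_sum fun k _ => by
        rw [norm_mul]; exact mul_le_mul_of_nonneg_right (hdom i k) (norm_nonneg _)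
    have hge : ρ * w i ≤ ∑ k, ‖B i k * u k‖ := by
      calc ρ * w i = ‖z‖ * w i := by rw [hzρ]
        _ = ‖z * u i‖ := (norm_mul _ _).symm
        _ = ‖∑ k, B i k * u k‖ := by rw [hBu' i]
        _ ≤ ∑ k, ‖B i k * u k‖ := norm_sum_le _ _
    exact le_antisymm (hle1.trans_eq (hAw i)) hge
  have hBeqA : ∀ i k, ‖B i k‖ = A i k := by
    intro i k
    have hle : ∀ j ∈ Finset.univ, ‖B i j * u j‖ ≤ A i j * w j := fun j _ => by
      rw [norm_mul]; exact mul_le_mul_of_nonneg_right (hdom i j) (norm_nonneg _)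
    have hseq : ∑ j, ‖B i j * u j‖ = ∑ j, A i j * w j := by
      rw [hsum_eq i, hAw i]
    have := (Finset.sum_eq_sum_iff_of_le hle).mp hseq k (Finset.mem_univ k)
    rw [norm_mul] at this
    exact mul_right_cancel₀ (hwpos k).ne' this
  have htri : ∀ i, ‖∑ k, B i k * u k‖ = ∑ k, ‖B i k * u k‖ := by
    intro i
    rw [hBu' i, norm_mul, hzρ, hsum_eq i]
  -- alignment
  have halign : ∀ i k, ((ρ * w i : ℝ) : ℂ) * (B i k * u k) = ((A i k * w k : ℝ) : ℂ) * (z * u i) := by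
    intro i k
    have := tri_eq Finset.univ (fun k => B i k * u k) (htri i) k (Finset.mem_univ k)
    rw [hBu' i] at this
    have hn1 : ‖z * u i‖ = ρ * w i := by rw [norm_mul, hzρ]
    have hn2 : ‖B i k * u k‖ = A i k * w k := by rw [norm_mul, hBeqA i k]
    rw [hn1, hn2] at this
    exact this
  -- construct c, d
  apply hnot
  refine ⟨z / (ρ : ℂ), fun i => u i / ((w i : ℝ) : ℂ), ?_, ?_, ?_⟩
  · rw [norm_div, hzρ, Complex.norm_real, Real.norm_eq_abs, abs_of_pos hρpos, div_self hρpos.ne']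
  · intro i
    rw [norm_div, Complex.norm_real, Real.norm_eq_abs, abs_of_pos (hwpos i), div_self (hwpos i).ne']
  · ext i k
    have hent : (Matrix.diagonal (fun i => u i / ((w i : ℝ) : ℂ)) * A.map Complex.ofReal *
        Matrix.diagonal fun i => (u i / ((w i : ℝ) : ℂ))⁻¹) i k
        = (u i / ((w i : ℝ) : ℂ)) * ((A i k : ℝ) : ℂ) * (u k / ((w k : ℝ) : ℂ))⁻¹ := by
      rw [Matrix.mul_diagonal, Matrix.diagonal_mul, Matrix.map_apply]
    rw [Matrix.smul_apply, hent, smul_eq_mul]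
    have key := halign i k
    have hρne : ((ρ : ℝ) : ℂ) ≠ 0 := by
      simpa using hρpos.ne'
    have hwine : ((w i : ℝ) : ℂ) ≠ 0 := by simpa using (hwpos i).ne'
    have hwkne : ((w k : ℝ) : ℂ) ≠ 0 := by simpa using (hwpos k).ne'
    have hukne : u k ≠ 0 := hune k
    push_cast at key
    field_simp
    linear_combination key
end
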